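/- Let A be an associative algebra over ℂ with an invariant symmetric bilinear form ⟨,⟩_A, and let Γ ⊆ ℂ* be a subgroup. On the Lie algebra A(Γ) = A ⊗ ℂ_Γ with bracket [a⊗b, a'⊗b'] = aa' ⊗ bb' − a'a ⊗ b'b, the bilinear map ⟨a(c_1,n), b(c_2,r)⟩ := (n/(2m)) δ_{n+r,0} ⟨a,b⟩_A δ_{c_1 c_2, 1} c_1^r defines a 2-cocycle; that is, it is skew-symmetric on the relevant spanning elements and satisfies ⟨[x,y],z⟩ + ⟨[y,z],x⟩ + ⟨[z,x],y⟩ = 0. -/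

import Mathlib

open Finset

/-- The Lie algebra `A(Γ) = A ⊗ ℂ_Γ`, modelled as finitely supported functions
`(ℤ × Γ) →₀ A`; the element `a ⊗ tⁿ T_c` is `single (n, c) a`. -/
abbrev AGamma (Γ : Subgroup ℂˣ) (A : Type*) [Ring A] [Algebra ℂ A] := (ℤ × Γ) →₀ A

/-- The bracket `[a ⊗ tⁿT_{c₁}, b ⊗ tʳT_{c₂}] = c₁ʳ (ab) ⊗ t^{n+r}T_{c₁c₂}
− c₂ⁿ (ba) ⊗ t^{n+r}T_{c₂c₁}` (note `c₁c₂ = c₂c₁`), extended bilinearly. -/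
noncomputable def aBracket (Γ : Subgroup ℂˣ) {A : Type*} [Ring A] [Algebra ℂ A]
    (x y : AGamma Γ A) : AGamma Γ A :=
  x.sum fun p a => y.sum fun q b =>
    Finsupp.single (p.1 + q.1, p.2 * q.2)
      (((((p.2 : ℂˣ) : ℂ) ^ q.1) • (a * b)) - ((((q.2 : ℂˣ) : ℂ) ^ p.1) • (b * a)))

/-- The bilinear form
`⟨a(c₁,n), b(c₂,r)⟩ = (n/(2m)) δ_{n+r,0} ⟨a,b⟩_A δ_{c₁c₂,1} c₁ʳ` on `A(Γ)`. -/
noncomputable def aForm (Γ : Subgroup ℂˣ) {A : Type*} [Ring A] [Algebra ℂ A]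
    (m : ℕ) (B : A →ₗ[ℂ] A →ₗ[ℂ] ℂ) (x y : AGamma Γ A) : ℂ :=
  x.sum fun p a => y.sum fun q b =>
    if p.1 + q.1 = 0 ∧ p.2 * q.2 = 1 then
      ((p.1 : ℂ) / (2 * (m : ℂ))) * B a b * (((p.2 : ℂˣ) : ℂ) ^ q.1)
    else 0

section Helpers

variable (Γ : Subgroup ℂˣ) {A : Type*} [Ring A] [Algebra ℂ A]
variable (m : ℕ) (B : A →ₗ[ℂ] A →ₗ[ℂ] ℂ)

lemma aForm_single (p q : ℤ × Γ) (a b : A) :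
    aForm Γ m B (Finsupp.single p a) (Finsupp.single q b) =
      if p.1 + q.1 = 0 ∧ p.2 * q.2 = 1 then
        ((p.1 : ℂ) / (2 * (m : ℂ))) * B a b * (((p.2 : ℂˣ) : ℂ) ^ q.1)
      else 0 := by
  unfold aForm
  rw [Finsupp.sum_single_index, Finsupp.sum_single_index] <;> simp

lemma aBracket_single (p q : ℤ × Γ) (a b : A) :
    aBracket Γ (Finsupp.single p a) (Finsupp.single q b) =
      Finsupp.single (p.1 + q.1, p.2 * q.2)
        (((((p.2 : ℂˣ) : ℂ) ^ q.1) • (a * b)) - ((((q.2 : ℂˣ) : ℂ) ^ p.1) • (b * a))) := by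
  unfold aBracket
  rw [Finsupp.sum_single_index, Finsupp.sum_single_index] <;> simp

lemma aForm_zero_left (y : AGamma Γ A) : aForm Γ m B 0 y = 0 := by
  simp [aForm]

lemma aForm_zero_right (x : AGamma Γ A) : aForm Γ m B x 0 = 0 := by
  simp [aForm]

lemma aBracket_zero_left (y : AGamma Γ A) : aBracket Γ (0 : AGamma Γ A) y = 0 := by
  simp [aBracket]

lemma aBracket_zero_right (x : AGamma Γ A) : aBracket Γ x (0 : AGamma Γ A) = 0 := by
  simp [aBracket]

lemma aForm_add_left (x₁ x₂ y : AGamma Γ A) :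
    aForm Γ m B (x₁ + x₂) y = aForm Γ m B x₁ y + aForm Γ m B x₂ y := by
  unfold aForm
  rw [Finsupp.sum_add_index]
  · intro p _; simp
  · intro p _ a₁ a₂
    rw [← Finsupp.sum_add]
    congr 1; funext q b
    split <;> simp <;> ring

lemma aForm_add_right (x y₁ y₂ : AGamma Γ A) :
    aForm Γ m B x (y₁ + y₂) = aForm Γ m B x y₁ + aForm Γ m B x y₂ := by
  unfold aForm
  rw [← Finsupp.sum_add]
  congr 1; funext p a
  rw [Finsupp.sum_add_index]
  · intro q _; simp
  · intro q _ b₁ b₂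
    split <;> simp <;> ring

lemma aBracket_add_left (x₁ x₂ y : AGamma Γ A) :
    aBracket Γ (x₁ + x₂) y = aBracket Γ x₁ y + aBracket Γ x₂ y := by
  unfold aBracket
  rw [Finsupp.sum_add_index]
  · intro p _; simp
  · intro p _ a₁ a₂
    rw [← Finsupp.sum_add]
    congr 1; funext q b
    rw [← Finsupp.single_add]
    congr 1
    simp only [mul_add, add_mul, smul_add]
    abel

lemma aBracket_add_right (x y₁ y₂ : AGamma Γ A) :
    aBracket Γ x (y₁ + y₂) = aBracket Γ x y₁ + aBracket Γ x y₂ := by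
  unfold aBracket
  rw [← Finsupp.sum_add]
  congr 1; funext p a
  rw [Finsupp.sum_add_index]
  · intro q _; simp
  · intro q _ b₁ b₂
    rw [← Finsupp.single_add]
    congr 1
    simp only [mul_add, add_mul, smul_add]
    abel

end Helpers

section KeyAlg

lemma pow_eq1 (x y z : ℂ) (hx : x ≠ 0) (hy : y ≠ 0) (hz : z ≠ 0)
    (N R L : ℤ) (hsum : N + R + L = 0) (hprod : x * y * z = 1) :
    x ^ R * (x * y) ^ L = z ^ N * (z * x) ^ R := by
  obtain rfl : L = -N - R := by omega
  have hz' : z = (x * y)⁻¹ := eq_inv_of_mul_eq_one_right (by linear_combination hprod)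
  subst hz'
  have h1 := zpow_ne_zero N hx; have h2 := zpow_ne_zero R hx
  have h3 := zpow_ne_zero N hy; have h4 := zpow_ne_zero R hy
  simp only [inv_zpow', mul_zpow, zpow_sub₀ hx, zpow_sub₀ hy, zpow_neg, neg_sub,
    sub_neg_eq_add, zpow_add₀ hx, zpow_add₀ hy]
  field_simp
  try ring
  try (left; ring)

lemma pow_eq2 (x y z : ℂ) (hx : x ≠ 0) (hy : y ≠ 0) (hz : z ≠ 0)
    (N R L : ℤ) (hsum : N + R + L = 0) (hprod : x * y * z = 1) :
    y ^ L * (y * z) ^ N = z ^ N * (z * x) ^ R := by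
  obtain rfl : L = -N - R := by omega
  have hz' : z = (x * y)⁻¹ := eq_inv_of_mul_eq_one_right (by linear_combination hprod)
  subst hz'
  have h1 := zpow_ne_zero N hx; have h2 := zpow_ne_zero R hx
  have h3 := zpow_ne_zero N hy; have h4 := zpow_ne_zero R hy
  simp only [inv_zpow', mul_zpow, zpow_sub₀ hx, zpow_sub₀ hy, zpow_neg, neg_sub,
    sub_neg_eq_add, zpow_add₀ hx, zpow_add₀ hy]
  field_simp
  try ring
  try (left; ring)

lemma pow_eq3 (x y z : ℂ) (hx : x ≠ 0) (hy : y ≠ 0) (hz : z ≠ 0)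
    (N R L : ℤ) (hsum : N + R + L = 0) (hprod : x * y * z = 1) :
    y ^ N * (x * y) ^ L = x ^ L * (z * x) ^ R := by
  obtain rfl : L = -N - R := by omega
  have hz' : z = (x * y)⁻¹ := eq_inv_of_mul_eq_one_right (by linear_combination hprod)
  subst hz'
  have h1 := zpow_ne_zero N hx; have h2 := zpow_ne_zero R hx
  have h3 := zpow_ne_zero N hy; have h4 := zpow_ne_zero R hy
  simp only [inv_zpow', mul_zpow, zpow_sub₀ hx, zpow_sub₀ hy, zpow_neg, neg_sub,
    sub_neg_eq_add, zpow_add₀ hx, zpow_add₀ hy]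
  field_simp
  try ring
  try (left; ring)

lemma pow_eq4 (x y z : ℂ) (hx : x ≠ 0) (hy : y ≠ 0) (hz : z ≠ 0)
    (N R L : ℤ) (hsum : N + R + L = 0) (hprod : x * y * z = 1) :
    z ^ R * (y * z) ^ N = x ^ L * (z * x) ^ R := by
  obtain rfl : L = -N - R := by omega
  have hz' : z = (x * y)⁻¹ := eq_inv_of_mul_eq_one_right (by linear_combination hprod)
  subst hz'
  have h1 := zpow_ne_zero N hx; have h2 := zpow_ne_zero R hx
  have h3 := zpow_ne_zero N hy; have h4 := zpow_ne_zero R hy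
  simp only [inv_zpow', mul_zpow, zpow_sub₀ hx, zpow_sub₀ hy, zpow_neg, neg_sub,
    sub_neg_eq_add, zpow_add₀ hx, zpow_add₀ hy]
  field_simp
  try ring
  try (left; ring)

lemma key_alg (x y z X Y M : ℂ) (hx : x ≠ 0) (hy : y ≠ 0) (hz : z ≠ 0)
    (N R L : ℤ) (hsum : N + R + L = 0) (hprod : x * y * z = 1) :
    (((N : ℂ) + R) / M) * (x ^ R * X - y ^ N * Y) * ((x * y) ^ L)
      + (((R : ℂ) + L) / M) * (y ^ L * X - z ^ R * Y) * ((y * z) ^ N)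
      + (((L : ℂ) + N) / M) * (z ^ N * X - x ^ L * Y) * ((z * x) ^ R) = 0 := by
  have e1 := pow_eq1 x y z hx hy hz N R L hsum hprod
  have e2 := pow_eq2 x y z hx hy hz N R L hsum hprod
  have f1 := pow_eq3 x y z hx hy hz N R L hsum hprod
  have f2 := pow_eq4 x y z hx hy hz N R L hsum hprod
  have hc : (N : ℂ) + R + L = 0 := by exact_mod_cast congrArg (Int.cast : ℤ → ℂ) hsum
  linear_combination (((N : ℂ) + R) / M) * X * e1 + (((R : ℂ) + L) / M) * X * e2
    - (((N : ℂ) + R) / M) * Y * f1 - (((R : ℂ) + L) / M) * Y * f2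
    + (2 * (X * (z ^ N * (z * x) ^ R) - Y * (x ^ L * (z * x) ^ R)) / M) * hc

end KeyAlg

/-- If `⟨,⟩_A` is a symmetric invariant bilinear form on the associative algebra `A`,
then the bilinear form `⟨a(c₁,n), b(c₂,r)⟩ = (n/(2m)) δ_{n+r,0} ⟨a,b⟩_A δ_{c₁c₂,1} c₁ʳ`
is a 2-cocycle on the Lie algebra `A(Γ)`: it is skew-symmetric on the spanning
elements, and `⟨[x,y],z⟩ + ⟨[y,z],x⟩ + ⟨[z,x],y⟩ = 0`. -/
theorem aForm_isTwoCocycle (Γ : Subgroup ℂˣ) (A : Type*) [Ring A] [Algebra ℂ A]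
    (m : ℕ) (hm : 0 < m) (B : A →ₗ[ℂ] A →ₗ[ℂ] ℂ)
    (hsymm : ∀ a b : A, B a b = B b a)
    (hinv : ∀ a b c : A, B (a * b) c = B a (b * c)) :
    (∀ (p q : ℤ × Γ) (a b : A),
        aForm Γ m B (Finsupp.single p a) (Finsupp.single q b)
          = - aForm Γ m B (Finsupp.single q b) (Finsupp.single p a)) ∧
      (∀ x y z : AGamma Γ A,
        aForm Γ m B (aBracket Γ x y) z + aForm Γ m B (aBracket Γ y z) x
          + aForm Γ m B (aBracket Γ z x) y = 0) := by
  constructor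
  · intro p q a b
    rw [aForm_single, aForm_single]
    by_cases h : p.1 + q.1 = 0 ∧ p.2 * q.2 = 1
    · have h' : q.1 + p.1 = 0 ∧ q.2 * p.2 = 1 := ⟨by omega, by rw [mul_comm]; exact h.2⟩
      rw [if_pos h, if_pos h']
      have hq1 : q.1 = -p.1 := by omega
      have hq2 : q.2 = p.2⁻¹ := eq_inv_of_mul_eq_one_left (by rw [mul_comm]; exact h.2)
      have hcast : (((q.2 : ℂˣ) : ℂ)) = (((p.2 : ℂˣ) : ℂ))⁻¹ := by
        rw [hq2]; push_cast; ring
      rw [hq1, hcast, hsymm b a, inv_zpow']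
      push_cast
      ring
    · have h' : ¬(q.1 + p.1 = 0 ∧ q.2 * p.2 = 1) :=
        fun hc => h ⟨by omega, by rw [mul_comm]; exact hc.2⟩
      rw [if_neg h, if_neg h']
      simp
  · intro x y z
    induction x using Finsupp.induction_linear with
    | zero => simp [aBracket_zero_left, aBracket_zero_right, aForm_zero_left, aForm_zero_right]
    | add f g hf hg =>
      rw [aBracket_add_left, aBracket_add_right, aForm_add_left, aForm_add_right,
        aForm_add_left]
      linear_combination hf + hg
    | single p a =>
      induction y using Finsupp.induction_linear with
      | zero => simp [aBracket_zero_left, aBracket_zero_right, aForm_zero_left, aForm_zero_right]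
      | add f g hf hg =>
        rw [aBracket_add_right, aBracket_add_left, aForm_add_left, aForm_add_left,
          aForm_add_right]
        linear_combination hf + hg
      | single q b =>
        induction z using Finsupp.induction_linear with
        | zero => simp [aBracket_zero_left, aBracket_zero_right, aForm_zero_left, aForm_zero_right]
        | add f g hf hg =>
          rw [aBracket_add_right, aBracket_add_left, aForm_add_right, aForm_add_left,
            aForm_add_left]
          linear_combination hf + hg
        | single s d =>
          rw [aBracket_single, aBracket_single, aBracket_single,
            aForm_single, aForm_single, aForm_single]
          dsimp only
          by_cases h : p.1 + q.1 + s.1 = 0 ∧ p.2 * q.2 * s.2 = 1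
          · have h2 : q.1 + s.1 + p.1 = 0 ∧ q.2 * s.2 * p.2 = 1 :=
              ⟨by omega, by rw [← mul_rotate]; exact h.2⟩
            have h3 : s.1 + p.1 + q.1 = 0 ∧ s.2 * p.2 * q.2 = 1 :=
              ⟨by omega, by rw [← mul_rotate, ← mul_rotate]; exact h.2⟩
            rw [if_pos h, if_pos h2, if_pos h3]
            set x : ℂ := ((p.2 : ℂˣ) : ℂ) with hxdef
            set y : ℂ := ((q.2 : ℂˣ) : ℂ) with hydef
            set z : ℂ := ((s.2 : ℂˣ) : ℂ) with hzdef
            have hx : x ≠ 0 := Units.ne_zero _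
            have hy : y ≠ 0 := Units.ne_zero _
            have hz : z ≠ 0 := Units.ne_zero _
            have hprod : x * y * z = 1 := by
              have := congrArg (fun u : Γ => ((u : ℂˣ) : ℂ)) h.2
              push_cast at this
              exact this
            have hX2 : B (b * d) a = B (a * b) d := by rw [hsymm, ← hinv]
            have hX3 : B (d * a) b = B (a * b) d := by rw [hinv, hsymm]
            have hY2 : B (d * b) a = B (b * a) d := by rw [hsymm, ← hinv, hsymm, ← hinv]
            have hY3 : B (a * d) b = B (b * a) d := by rw [hsymm, ← hinv]
            have key := key_alg x y z (B (a * b) d) (B (b * a) d) (2 * (m : ℂ))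
              hx hy hz p.1 q.1 s.1 h.1 hprod
            simp only [map_sub, map_smul, LinearMap.sub_apply, LinearMap.smul_apply,
              smul_eq_mul, hX2, hX3, hY2, hY3]
            push_cast
            linear_combination key
          · have h2 : ¬(q.1 + s.1 + p.1 = 0 ∧ q.2 * s.2 * p.2 = 1) :=
              fun hc => h ⟨by omega, by rw [mul_rotate]; exact hc.2⟩
            have h3 : ¬(s.1 + p.1 + q.1 = 0 ∧ s.2 * p.2 * q.2 = 1) :=
              fun hc => h ⟨by omega, by rw [mul_rotate, mul_rotate]; exact hc.2⟩
            rw [if_neg h, if_neg h2, if_neg h3]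
            simp
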